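/- One-sided limits and sign reversal of the normalized output at a zero: Let n, m be positive integers, A ∈ ℝ^{n×n}, B ∈ ℝ^{n×m}, and let w ∈ ℝⁿ be such that Bᵀ (Aᵀ)^j w ≠ 0 for some j ∈ ℕ. Let p := min{ j ∈ ℕ : Bᵀ (Aᵀ)^j w ≠ 0 } and a := (1/p!)·Bᵀ (Aᵀ)^p w. Then there exists δ > 0 such that Bᵀ e^{sAᵀ} w ≠ 0 for all s with 0 < |s| < δ, and the normalized output satisfies the one-sided limits lim_{s→0⁺} Bᵀ e^{sAᵀ} w / ‖Bᵀ e^{sAᵀ} w‖ = a/‖a‖ and lim_{s→0⁻} Bᵀ e^{sAᵀ} w / ‖Bᵀ e^{sAᵀ} w‖ = (−1)^p · a/‖a‖. In particular, if p is odd the two one-sided limits sum to zero (the normalized output jumps from one direction to the reverse direction), and if p is even they coincide. -/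

import Mathlib

open Matrix NormedSpace

/-- The Euclidean norm of a finite real vector. -/
noncomputable def euclNorm {ι : Type*} [Fintype ι] (x : ι → ℝ) : ℝ :=
  Real.sqrt (∑ i, x i ^ 2)

lemma euclNorm_eq {ι : Type*} [Fintype ι] (x : ι → ℝ) :
    euclNorm x = ‖(WithLp.equiv 2 (ι → ℝ)).symm x‖ := by
  rw [EuclideanSpace.norm_eq]
  simp [euclNorm, sq_abs]

lemma continuous_euclNorm {ι : Type*} [Fintype ι] : Continuous (euclNorm (ι := ι)) := by
  unfold euclNorm
  exact Real.continuous_sqrt.comp (by fun_prop)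

lemma euclNorm_smul {ι : Type*} [Fintype ι] (r : ℝ) (x : ι → ℝ) :
    euclNorm (r • x) = |r| * euclNorm x := by
  simp only [euclNorm_eq]
  have : (WithLp.equiv 2 (ι → ℝ)).symm (r • x) = r • (WithLp.equiv 2 (ι → ℝ)).symm x := rfl
  rw [this, norm_smul, Real.norm_eq_abs]

lemma euclNorm_ne_zero {ι : Type*} [Fintype ι] {x : ι → ℝ} (h : x ≠ 0) : euclNorm x ≠ 0 := by
  rw [euclNorm_eq, norm_ne_zero_iff]
  intro hx
  apply h
  have := congrArg (WithLp.equiv 2 (ι → ℝ)) hx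
  simpa using this

set_option maxHeartbeats 1600000 in
/-- **One-sided limits and sign reversal of the normalized output at a zero.**
Let `p` be the least `j` with `Bᵀ (Aᵀ)^j w ≠ 0` and `a := (1/p!)·Bᵀ (Aᵀ)^p w`. Then the
output `s ↦ Bᵀ e^{sAᵀ} w` is nonzero for `0 < |s| < δ` (some `δ > 0`), and its
normalization tends to `a/‖a‖` as `s → 0⁺` and to `(-1)^p · a/‖a‖` as `s → 0⁻`. -/
theorem normalized_output_one_sided_limits
    (n m : ℕ) (hn : 0 < n) (hm : 0 < m)
    (A : Matrix (Fin n) (Fin n) ℝ) (B : Matrix (Fin n) (Fin m) ℝ)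
    (w : Fin n → ℝ) (hw : ∃ j : ℕ, Bᵀ.mulVec ((Aᵀ ^ j).mulVec w) ≠ 0)
    (p : ℕ) (hp : p = sInf {j : ℕ | Bᵀ.mulVec ((Aᵀ ^ j).mulVec w) ≠ 0})
    (a : Fin m → ℝ)
    (ha : a = ((1 : ℝ) / (Nat.factorial p : ℝ)) • Bᵀ.mulVec ((Aᵀ ^ p).mulVec w)) :
    (∃ δ : ℝ, 0 < δ ∧ ∀ s : ℝ, 0 < |s| → |s| < δ →
        Bᵀ.mulVec ((exp (s • Aᵀ)).mulVec w) ≠ 0) ∧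
    Filter.Tendsto
      (fun s : ℝ => (euclNorm (Bᵀ.mulVec ((exp (s • Aᵀ)).mulVec w)))⁻¹ •
        Bᵀ.mulVec ((exp (s • Aᵀ)).mulVec w))
      (nhdsWithin 0 (Set.Ioi 0)) (nhds ((euclNorm a)⁻¹ • a)) ∧
    Filter.Tendsto
      (fun s : ℝ => (euclNorm (Bᵀ.mulVec ((exp (s • Aᵀ)).mulVec w)))⁻¹ •
        Bᵀ.mulVec ((exp (s • Aᵀ)).mulVec w))
      (nhdsWithin 0 (Set.Iio 0)) (nhds (((-1 : ℝ) ^ p * (euclNorm a)⁻¹) • a)) := by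
  classical
  letI : SeminormedRing (Matrix (Fin n) (Fin n) ℝ) := Matrix.linftyOpSemiNormedRing
  letI : NormedRing (Matrix (Fin n) (Fin n) ℝ) := Matrix.linftyOpNormedRing
  letI : NormedAlgebra ℝ (Matrix (Fin n) (Fin n) ℝ) := Matrix.linftyOpNormedAlgebra
  letI : TopologicalSpace (Matrix (Fin n) (Fin n) ℝ) :=
    PseudoMetricSpace.toUniformSpace.toTopologicalSpace
  set c : ℕ → (Fin m → ℝ) := fun j => Bᵀ.mulVec ((Aᵀ ^ j).mulVec w) with hcdef
  -- the continuous linear map  M ↦ Bᵀ (M w)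
  let L0 : Matrix (Fin n) (Fin n) ℝ →ₗ[ℝ] (Fin m → ℝ) :=
    { toFun := fun M => Bᵀ.mulVec (M.mulVec w)
      map_add' := fun M N => by simp [Matrix.add_mulVec, Matrix.mulVec_add]
      map_smul' := fun r M => by
        simp [Matrix.smul_mulVec, Matrix.mulVec_smul] }
  let L : Matrix (Fin n) (Fin n) ℝ →L[ℝ] (Fin m → ℝ) := LinearMap.toContinuousLinearMap L0
  have hL : ∀ M : Matrix (Fin n) (Fin n) ℝ, L M = Bᵀ.mulVec (M.mulVec w) := fun _ => rfl
  -- series coefficients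
  let term : ℝ → ℕ → (Fin m → ℝ) := fun s k => (((k.factorial : ℝ))⁻¹ * s ^ k) • c k
  have hterm_eq : ∀ (s : ℝ) (k : ℕ),
      L (((k.factorial : ℝ))⁻¹ • (s • Aᵀ) ^ k) = term s k := by
    intro s k
    rw [smul_pow, L.map_smul, L.map_smul, smul_smul]
    rfl
  have hsumf : ∀ s : ℝ, Summable (term s) := by
    intro s
    have h := expSeries_summable' (𝕂 := ℝ) (x := s • Aᵀ)
    have h2 := h.map L.toLinearMap.toAddMonoidHom L.continuous
    refine h2.congr fun k => ?_
    exact hterm_eq s k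
  have hrepr : ∀ s : ℝ, Bᵀ.mulVec ((exp (s • Aᵀ)).mulVec w) = ∑' k : ℕ, term s k := by
    intro s
    have h1 : Bᵀ.mulVec ((exp (s • Aᵀ)).mulVec w) = L (exp (s • Aᵀ)) := rfl
    rw [h1, exp_eq_tsum (𝕂 := ℝ), L.map_tsum (expSeries_summable' (𝕂 := ℝ) (x := s • Aᵀ))]
    exact tsum_congr fun k => hterm_eq s k
  -- vanishing below p, nonvanishing at p
  have hczero : ∀ j, j < p → c j = 0 := by
    intro j hj
    by_contra hne
    have : p ≤ j := hp ▸ Nat.sInf_le hne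
    omega
  have hcp : c p ≠ 0 := by
    have h := Nat.sInf_mem (s := {j : ℕ | c j ≠ 0}) hw
    rw [← hp] at h
    exact h
  have ha' : a = ((p.factorial : ℝ))⁻¹ • c p := by rw [ha, one_div]
  have hfac : ∀ k : ℕ, ((k.factorial : ℝ)) ≠ 0 := fun k =>
    Nat.cast_ne_zero.mpr (Nat.factorial_ne_zero k)
  have ha0 : a ≠ 0 := by
    rw [ha']
    exact smul_ne_zero (inv_ne_zero (hfac p)) hcp
  -- the shifted series g
  let tg : ℝ → ℕ → (Fin m → ℝ) := fun s k => ((((k + p).factorial : ℝ))⁻¹ * s ^ k) • c (k + p)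
  let g : ℝ → (Fin m → ℝ) := fun s => ∑' k : ℕ, tg s k
  have hshift : ∀ (s : ℝ) (k : ℕ), term s (k + p) = s ^ p • tg s k := by
    intro s k
    show (((((k + p).factorial : ℝ))⁻¹ * s ^ (k + p)) • c (k + p) : Fin m → ℝ) = _
    rw [smul_smul]
    congr 1
    rw [pow_add]
    ring
  have hsum_tg : ∀ s : ℝ, Summable (tg s) := by
    intro s
    rcases eq_or_ne s 0 with rfl | hs
    · apply summable_of_ne_finset_zero (s := {0})
      intro k hk
      have hk0 : k ≠ 0 := by simpa using hk
      show ((((k + p).factorial : ℝ))⁻¹ * (0:ℝ) ^ k) • c (k + p) = 0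
      rw [zero_pow hk0]
      simp
    · have h1 : Summable fun k => term s (k + p) := (summable_nat_add_iff p).2 (hsumf s)
      have h2 := h1.const_smul ((s ^ p)⁻¹)
      refine h2.congr fun k => ?_
      rw [hshift, inv_smul_smul₀ (pow_ne_zero _ hs)]
  have hfg : ∀ s : ℝ, Bᵀ.mulVec ((exp (s • Aᵀ)).mulVec w) = s ^ p • g s := by
    intro s
    rw [hrepr s]
    have h1 := Summable.sum_add_tsum_nat_add (f := term s) p (hsumf s)
    have h2 : ∑ i ∈ Finset.range p, term s i = 0 := by
      apply Finset.sum_eq_zero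
      intro i hi
      have : c i = 0 := hczero i (Finset.mem_range.mp hi)
      show (((i.factorial : ℝ))⁻¹ * s ^ i) • c i = 0
      rw [this, smul_zero]
    rw [← h1, h2, zero_add]
    calc ∑' k : ℕ, term s (k + p) = ∑' k : ℕ, s ^ p • tg s k := tsum_congr fun k => hshift s k
      _ = s ^ p • g s := Summable.tsum_const_smul _ (hsum_tg s)
  have htg0 : ∀ s : ℝ, tg s 0 = a := by
    intro s
    show ((((0 + p).factorial : ℝ))⁻¹ * s ^ 0) • c (0 + p) = a
    rw [zero_add, pow_zero, mul_one, ha']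
  have hg0 : g 0 = a := by
    have : g 0 = tg 0 0 := by
      apply tsum_eq_single
      intro k hk
      show ((((k + p).factorial : ℝ))⁻¹ * (0:ℝ) ^ k) • c (k + p) = 0
      rw [zero_pow hk]
      simp
    rw [this, htg0]
  -- quantitative bound for continuity of g at 0
  set K : ℝ := ‖Aᵀ‖ with hK
  have hcb : ∀ j : ℕ, 0 < j → ‖c j‖ ≤ ‖L‖ * K ^ j := by
    intro j hj
    have h1 : c j = L (Aᵀ ^ j) := rfl
    rw [h1]
    calc ‖L (Aᵀ ^ j)‖ ≤ ‖L‖ * ‖Aᵀ ^ j‖ := L.le_opNorm _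
      _ ≤ ‖L‖ * K ^ j := by
          gcongr
          exact norm_pow_le' Aᵀ hj
  let u : ℕ → ℝ := fun k => ‖L‖ * (K ^ (k + 1 + p) / ((k + 1 + p).factorial : ℝ))
  have hu : Summable u := by
    have h1 := Real.summable_pow_div_factorial K
    have h2 : Summable fun k : ℕ => K ^ (k + (1 + p)) / ((k + (1 + p)).factorial : ℝ) :=
      (summable_nat_add_iff (1 + p)).2 h1
    have h3 := h2.mul_left ‖L‖
    refine h3.congr fun k => ?_
    simp [u, add_assoc]
  have hu0 : ∀ k, 0 ≤ u k := by
    intro k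
    apply mul_nonneg (norm_nonneg _)
    positivity
  have hptle : ∀ (s : ℝ), |s| ≤ 1 → ∀ k : ℕ, ‖tg s (k + 1)‖ ≤ |s| * u k := by
    intro s hs k
    have h1 : ‖tg s (k + 1)‖ =
        (((k + 1 + p).factorial : ℝ))⁻¹ * |s| ^ (k + 1) * ‖c (k + 1 + p)‖ := by
      show ‖((((k + 1 + p).factorial : ℝ))⁻¹ * s ^ (k + 1)) • c (k + 1 + p)‖ = _
      rw [norm_smul, Real.norm_eq_abs, abs_mul, abs_pow]
      congr 2
      rw [abs_of_nonneg (by positivity)]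
    rw [h1]
    have h2 : ‖c (k + 1 + p)‖ ≤ ‖L‖ * K ^ (k + 1 + p) := hcb _ (by omega)
    have h3 : |s| ^ (k + 1) ≤ |s| := by
      calc |s| ^ (k + 1) = |s| * |s| ^ k := by ring
        _ ≤ |s| * 1 :=
            mul_le_mul_of_nonneg_left (pow_le_one₀ (abs_nonneg s) hs) (abs_nonneg s)
        _ = |s| := mul_one _
    calc (((k + 1 + p).factorial : ℝ))⁻¹ * |s| ^ (k + 1) * ‖c (k + 1 + p)‖
        ≤ (((k + 1 + p).factorial : ℝ))⁻¹ * |s| * (‖L‖ * K ^ (k + 1 + p)) := by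
          have h4 : (0:ℝ) ≤ (((k + 1 + p).factorial : ℝ))⁻¹ := by positivity
          exact mul_le_mul (mul_le_mul_of_nonneg_left h3 h4) h2 (norm_nonneg _)
            (by positivity)
      _ = |s| * u k := by
          simp only [u]
          field_simp
  have hbound : ∀ s : ℝ, |s| ≤ 1 → ‖g s - a‖ ≤ |s| * ∑' k, u k := by
    intro s hs
    have h1 : g s = tg s 0 + ∑' k : ℕ, tg s (k + 1) := Summable.tsum_eq_zero_add (hsum_tg s)
    have h2 : g s - a = ∑' k : ℕ, tg s (k + 1) := by
      rw [h1, htg0]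
      abel
    rw [h2]
    have hsn : Summable fun k : ℕ => ‖tg s (k + 1)‖ := by
      apply Summable.of_nonneg_of_le (fun k => norm_nonneg _) (hptle s hs)
      exact hu.mul_left |s|
    calc ‖∑' k : ℕ, tg s (k + 1)‖ ≤ ∑' k : ℕ, ‖tg s (k + 1)‖ := norm_tsum_le_tsum_norm hsn
      _ ≤ ∑' k : ℕ, |s| * u k := Summable.tsum_le_tsum (hptle s hs) hsn (hu.mul_left |s|)
      _ = |s| * ∑' k, u k := tsum_mul_left
  have htend : Filter.Tendsto g (nhds 0) (nhds a) := by
    rw [tendsto_iff_norm_sub_tendsto_zero]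
    have hb : Filter.Tendsto (fun s : ℝ => |s| * ∑' k, u k) (nhds 0) (nhds 0) := by
      have h1 : Filter.Tendsto (fun s : ℝ => |s|) (nhds 0) (nhds 0) := by
        simpa using (continuous_abs.tendsto (0 : ℝ))
      simpa using h1.mul_const (∑' k, u k)
    apply squeeze_zero' (Filter.Eventually.of_forall fun s => norm_nonneg _) ?_ hb
    have h1 : ∀ᶠ s : ℝ in nhds 0, |s| ≤ 1 := by
      have := Metric.ball_mem_nhds (0 : ℝ) one_pos
      filter_upwards [this] with s hs
      rw [Metric.mem_ball, Real.dist_0_eq_abs] at hs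
      exact le_of_lt hs
    filter_upwards [h1] with s hs
    exact hbound s hs
  -- δ such that g is close to a
  have hNa : euclNorm a ≠ 0 := euclNorm_ne_zero ha0
  have hgo : ∀ᶠ s : ℝ in nhds 0, g s ≠ 0 := by
    have hb : Metric.ball a ‖a‖ ∈ nhds a := Metric.ball_mem_nhds a (norm_pos_iff.mpr ha0)
    filter_upwards [htend hb] with s hs
    intro h0
    have hs' : dist (g s) a < ‖a‖ := hs
    rw [h0, dist_zero_left] at hs'
    exact lt_irrefl _ hs' 
  obtain ⟨δ, hδ, hδ'⟩ := Metric.eventually_nhds_iff.mp hgo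
  -- continuity of normalization at a
  have hconta : ContinuousAt (fun x : Fin m → ℝ => (euclNorm x)⁻¹ • x) a := by
    exact ((continuous_euclNorm.continuousAt).inv₀ hNa).smul continuousAt_id
  have hconta2 : ContinuousAt (fun x : Fin m → ℝ => ((-1 : ℝ) ^ p * (euclNorm x)⁻¹) • x) a := by
    exact (((continuous_euclNorm.continuousAt).inv₀ hNa).const_mul _).smul continuousAt_id
  refine ⟨⟨δ, hδ, ?_⟩, ?_, ?_⟩
  · intro s hs1 hs2
    have hs0 : s ≠ 0 := by
      intro h; rw [h] at hs1; simp at hs1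
    have hgs : g s ≠ 0 := hδ' (by rwa [Real.dist_0_eq_abs])
    erw [hfg s]
    exact smul_ne_zero (pow_ne_zero _ hs0) hgs
  · -- right limit
    have hmain : Filter.Tendsto (fun s : ℝ => (euclNorm (g s))⁻¹ • g s)
        (nhdsWithin 0 (Set.Ioi 0)) (nhds ((euclNorm a)⁻¹ • a)) :=
      hconta.tendsto.comp (htend.mono_left nhdsWithin_le_nhds)
    apply hmain.congr'
    filter_upwards [self_mem_nhdsWithin] with s hs
    have hspos : (0 : ℝ) < s := hs
    have hsp : (0 : ℝ) < s ^ p := pow_pos hspos p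
    erw [hfg s]
    rw [euclNorm_smul, abs_of_pos hsp, smul_smul]
    congr 1
    rw [_root_.mul_inv_rev, mul_assoc, inv_mul_cancel₀ (ne_of_gt hsp), mul_one]
  · -- left limit
    have hmain : Filter.Tendsto (fun s : ℝ => ((-1 : ℝ) ^ p * (euclNorm (g s))⁻¹) • g s)
        (nhdsWithin 0 (Set.Iio 0)) (nhds (((-1 : ℝ) ^ p * (euclNorm a)⁻¹) • a)) :=
      hconta2.tendsto.comp (htend.mono_left nhdsWithin_le_nhds)
    apply hmain.congr'
    filter_upwards [self_mem_nhdsWithin] with s hs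
    have hsneg : s < (0 : ℝ) := hs
    have hns : (0 : ℝ) < -s := by linarith
    have hnsp : (0 : ℝ) < (-s) ^ p := pow_pos hns p
    have habs : |s ^ p| = (-s) ^ p := by
      rw [abs_pow, abs_of_neg hsneg]
    have hsp : s ^ p = (-1 : ℝ) ^ p * (-s) ^ p := by
      rw [← neg_pow, neg_neg]
    erw [hfg s]
    rw [euclNorm_smul, habs, smul_smul]
    congr 1
    rw [hsp]
    generalize euclNorm (g s) = N
    rcases eq_or_ne N 0 with rfl | hN
    · simp [_root_.mul_inv]
    · field_simp
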